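/- Let μ and ν be Borel probability measures on ℝ^d with finite second moments, with μ absolutely continuous with respect to the Lebesgue measure, and let G : ℝ^d → ℝ be a convex function, differentiable μ-almost everywhere, with (∇G)_* μ = ν. Then for any measurable map g : ℝ^d → ℝ^d with g_* μ = ν, the quadratic transport cost satisfies ∫ ‖x − ∇G(x)‖² dμ(x) ≤ ∫ ‖x − g(x)‖² dμ(x); equivalently, ∫ ⟨x, ∇G(x)⟩ dμ(x) ≥ ∫ ⟨x, g(x)⟩ dμ(x), assuming x ↦ G(x) is μ-integrable and y ↦ G*(y) is ν-integrable, where G* is the Fenchel conjugate of G. That is, among all transport maps from μ to ν, the gradient of a convex potential minimizes the expected squared displacement. -/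

import Mathlib

open MeasureTheory Filter Topology Set
open scoped RealInnerProductSpace


lemma subgrad {d : ℕ} {G : EuclideanSpace ℝ (Fin d) → ℝ} (hG : ConvexOn ℝ univ G)
    {x : EuclideanSpace ℝ (Fin d)} (hx : DifferentiableAt ℝ G x) (z : EuclideanSpace ℝ (Fin d)) :
    ⟪gradient G x, z - x⟫ ≤ G z - G x := by
  set v := z - x with hv
  have hline : HasDerivAt (fun t : ℝ => x + t • v) v 0 := by
    simpa using ((hasDerivAt_id (0:ℝ)).smul_const v).const_add x
  have hx' : HasFDerivAt G (fderiv ℝ G x) (x + (0:ℝ) • v) := by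
    simpa using hx.hasFDerivAt
  have hcomp : HasDerivAt (fun t : ℝ => G (x + t • v)) (fderiv ℝ G x v) 0 := by
    exact hx'.comp_hasDerivAt 0 hline
  have hgrad : ⟪gradient G x, v⟫ = fderiv ℝ G x v := by
    simp [gradient, InnerProductSpace.toDual_symm_apply]
  rw [hgrad]
  rw [hasDerivAt_iff_tendsto_slope] at hcomp
  have h2 : Tendsto (slope (fun t : ℝ => G (x + t • v)) 0) (𝓝[>] 0) (𝓝 (fderiv ℝ G x v)) :=
    hcomp.mono_left (nhdsWithin_mono _ (fun t ht => ne_of_gt ht))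
  refine le_of_tendsto h2 ?_
  filter_upwards [Ioc_mem_nhdsGT_of_mem (Set.mem_Ico.2 ⟨le_refl (0:ℝ), one_pos⟩)] with t ht
  have ht0 : (0:ℝ) < t := ht.1
  have hconv := hG.2 (mem_univ x) (mem_univ z) (show (0:ℝ) ≤ 1 - t by linarith [ht.2])
    ht0.le (by ring)
  have hpt : (1 - t) • x + t • z = x + t • v := by rw [hv]; module
  rw [hpt] at hconv
  have hs : slope (fun t : ℝ => G (x + t • v)) 0 t = (G (x + t • v) - G (x + (0:ℝ) • v)) / t := by
    simp [slope]; ring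
  rw [hs, div_le_iff₀ ht0]
  have hx0 : x + (0:ℝ) • v = x := by simp
  rw [hx0]
  simp only [smul_eq_mul] at hconv
  nlinarith [hconv]

-- pointwise bound from subgradient
lemma conj_bound {d : ℕ} {G : EuclideanSpace ℝ (Fin d) → ℝ} (hG : ConvexOn ℝ univ G)
    {x : EuclideanSpace ℝ (Fin d)} (hx : DifferentiableAt ℝ G x) (z : EuclideanSpace ℝ (Fin d)) :
    ⟪z, gradient G x⟫ - G z ≤ ⟪x, gradient G x⟫ - G x := by
  have h := subgrad hG hx z
  have h2 : ⟪gradient G x, z - x⟫ = ⟪z, gradient G x⟫ - ⟪x, gradient G x⟫ := by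
    rw [real_inner_comm, inner_sub_left]
  linarith [h, h2.symm.le, h2.le]

lemma conj_eq {d : ℕ} {G : EuclideanSpace ℝ (Fin d) → ℝ} (hG : ConvexOn ℝ univ G)
    {x : EuclideanSpace ℝ (Fin d)} (hx : DifferentiableAt ℝ G x) :
    (⨆ z : EuclideanSpace ℝ (Fin d), (⟪z, gradient G x⟫ - G z)) = ⟪x, gradient G x⟫ - G x := by
  have hbdd : BddAbove (range fun z : EuclideanSpace ℝ (Fin d) => ⟪z, gradient G x⟫ - G z) := by
    refine ⟨⟪x, gradient G x⟫ - G x, ?_⟩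
    rintro _ ⟨z, rfl⟩
    exact conj_bound hG hx z
  exact le_antisymm (ciSup_le (conj_bound hG hx)) (le_ciSup hbdd x)

noncomputable def Sset (d : ℕ) (G : EuclideanSpace ℝ (Fin d) → ℝ) : Set (EuclideanSpace ℝ (Fin d)) :=
  ⋃ n : ℕ, ⋂ m : ℕ,
    {y | ⟪TopologicalSpace.denseSeq (EuclideanSpace ℝ (Fin d)) m, y⟫
      - G (TopologicalSpace.denseSeq (EuclideanSpace ℝ (Fin d)) m) ≤ n}

lemma Sset_meas (d : ℕ) (G : EuclideanSpace ℝ (Fin d) → ℝ) : MeasurableSet (Sset d G) := by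
  refine MeasurableSet.iUnion fun n => MeasurableSet.iInter fun m => ?_
  exact measurableSet_le (((continuous_const.inner continuous_id).sub continuous_const).measurable)
    measurable_const

lemma Sset_bdd {d : ℕ} {G : EuclideanSpace ℝ (Fin d) → ℝ} (hG : ConvexOn ℝ univ G)
    {y : EuclideanSpace ℝ (Fin d)} (hy : y ∈ Sset d G) :
    BddAbove (range fun z : EuclideanSpace ℝ (Fin d) => ⟪z, y⟫ - G z) := by
  have hGcont : Continuous G := by
    rw [← continuousOn_univ]
    exact hG.continuousOn isOpen_univ
  obtain ⟨n, hn⟩ := mem_iUnion.1 hy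
  simp only [mem_iInter, mem_setOf_eq] at hn
  refine ⟨n, ?_⟩
  rintro _ ⟨z, rfl⟩
  have hclosed : IsClosed {z : EuclideanSpace ℝ (Fin d) | ⟪z, y⟫ - G z ≤ (n:ℝ)} :=
    isClosed_le ((continuous_id.inner continuous_const).sub hGcont) continuous_const
  have hsub : closure (range (TopologicalSpace.denseSeq (EuclideanSpace ℝ (Fin d))))
      ⊆ {z | ⟪z, y⟫ - G z ≤ (n:ℝ)} :=
    closure_minimal (range_subset_iff.2 hn) hclosed
  exact hsub ((TopologicalSpace.denseRange_denseSeq _) z)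

lemma Sset_grad_mem {d : ℕ} {G : EuclideanSpace ℝ (Fin d) → ℝ} (hG : ConvexOn ℝ univ G)
    {x : EuclideanSpace ℝ (Fin d)} (hx : DifferentiableAt ℝ G x) :
    gradient G x ∈ Sset d G := by
  refine mem_iUnion.2 ⟨⌈⟪x, gradient G x⟫ - G x⌉₊, mem_iInter.2 fun m => ?_⟩
  exact le_trans (conj_bound hG hx _) (Nat.le_ceil _)

/-- The gradient of a convex potential `G` transporting `μ` to `ν` minimizes the quadratic
transport cost among all transport maps: for any measurable `g` with `g_* μ = ν`,
`∫ ‖x − ∇G(x)‖² dμ ≤ ∫ ‖x − g(x)‖² dμ`, equivalently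
`∫ ⟨x, g(x)⟩ dμ ≤ ∫ ⟨x, ∇G(x)⟩ dμ`. -/
theorem gradient_convex_minimizes_quadratic_cost
    (d : ℕ) (μ ν : Measure (EuclideanSpace ℝ (Fin d)))
    [IsProbabilityMeasure μ] [IsProbabilityMeasure ν]
    (hμ2 : Integrable (fun x => ‖x‖ ^ 2) μ) (hν2 : Integrable (fun y => ‖y‖ ^ 2) ν)
    (hac : μ ≪ volume)
    (G : EuclideanSpace ℝ (Fin d) → ℝ) (hGconv : ConvexOn ℝ univ G)
    (hGdiff : ∀ᵐ x ∂μ, DifferentiableAt ℝ G x)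
    (hGpush : μ.map (fun x => gradient G x) = ν)
    (hGint : Integrable G μ)
    (hGstarint : Integrable (fun y : EuclideanSpace ℝ (Fin d) =>
      ⨆ x : EuclideanSpace ℝ (Fin d), (⟪x, y⟫ - G x)) ν)
    (g : EuclideanSpace ℝ (Fin d) → EuclideanSpace ℝ (Fin d))
    (hg : Measurable g) (hgpush : μ.map g = ν) :
    (∫ x, ‖x - gradient G x‖ ^ 2 ∂μ ≤ ∫ x, ‖x - g x‖ ^ 2 ∂μ) ∧
    (∫ x, ⟪x, g x⟫ ∂μ ≤ ∫ x, ⟪x, gradient G x⟫ ∂μ) := by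
  set Gs : EuclideanSpace ℝ (Fin d) → ℝ := fun y => ⨆ x : EuclideanSpace ℝ (Fin d), (⟪x, y⟫ - G x) with hGsdef
  have hmg : AEMeasurable g μ := hg.aemeasurable
  have hmGrad : AEMeasurable (fun x => gradient G x) μ := by
    by_contra h
    rw [Measure.map_of_not_aemeasurable h] at hGpush
    exact (IsProbabilityMeasure.ne_zero ν) hGpush.symm
  -- integrability and integral identity for Gs composed with a pushforward map
  have hGscomp : ∀ φ : EuclideanSpace ℝ (Fin d) → EuclideanSpace ℝ (Fin d), AEMeasurable φ μ → μ.map φ = ν →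
      Integrable (fun x => Gs (φ x)) μ ∧ ∫ x, Gs (φ x) ∂μ = ∫ y, Gs y ∂ν := by
    intro φ hφ hpush
    have hsm : AEStronglyMeasurable Gs (μ.map φ) := by rw [hpush]; exact hGstarint.1
    constructor
    · have := (integrable_map_measure hsm hφ).1 (by rw [hpush]; exact hGstarint)
      exact this
    · rw [← hpush, integral_map hφ hsm]
  -- same for the squared norm
  have hn2 : ∀ φ : EuclideanSpace ℝ (Fin d) → EuclideanSpace ℝ (Fin d), AEMeasurable φ μ → μ.map φ = ν →
      Integrable (fun x => ‖φ x‖ ^ 2) μ ∧ ∫ x, ‖φ x‖ ^ 2 ∂μ = ∫ y, ‖y‖ ^ 2 ∂ν := by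
    intro φ hφ hpush
    have hsm : AEStronglyMeasurable (fun y : EuclideanSpace ℝ (Fin d) => ‖y‖ ^ 2) (μ.map φ) :=
      (continuous_norm.pow 2).aestronglyMeasurable
    constructor
    · have := (integrable_map_measure hsm hφ).1 (by rw [hpush]; exact hν2)
      exact this
    · rw [← hpush, integral_map hφ hsm]
  obtain ⟨hg2, hg2eq⟩ := hn2 g hmg hgpush
  obtain ⟨hGrad2, hGrad2eq⟩ := hn2 _ hmGrad hGpush
  obtain ⟨hGsg, hGsgeq⟩ := hGscomp g hmg hgpush
  obtain ⟨hGsGrad, hGsGradeq⟩ := hGscomp _ hmGrad hGpush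
  -- integrability of the inner products
  have hinner : ∀ φ : EuclideanSpace ℝ (Fin d) → EuclideanSpace ℝ (Fin d), AEMeasurable φ μ → Integrable (fun x => ‖φ x‖ ^ 2) μ →
      Integrable (fun x => ⟪x, φ x⟫) μ := by
    intro φ hφ hφ2
    have hsm : AEStronglyMeasurable (fun x => ⟪x, φ x⟫) μ := by
      have : AEMeasurable (fun x : EuclideanSpace ℝ (Fin d) => (x, φ x)) μ := aemeasurable_id.prodMk hφ
      exact (continuous_inner.measurable.comp_aemeasurable this).aestronglyMeasurable
    refine (hμ2.add hφ2).mono' hsm ?_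
    filter_upwards with x
    have h1 := abs_real_inner_le_norm x (φ x)
    have h2 := norm_nonneg x
    have h3 := norm_nonneg (φ x)
    rw [Real.norm_eq_abs]
    simp only [Pi.add_apply]
    nlinarith [sq_nonneg (‖x‖ - ‖φ x‖)]
  have hinner_g := hinner g hmg hg2
  have hinnerGrad := hinner _ hmGrad hGrad2
  -- a.e. membership in the bounded set
  have hdiff_S : ∀ᵐ x ∂μ, gradient G x ∈ Sset d G :=
    hGdiff.mono fun x hx => Sset_grad_mem hGconv hx
  have hν_S : ∀ᵐ y ∂ν, y ∈ Sset d G := by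
    rw [← hGpush]
    exact (ae_map_iff hmGrad (Sset_meas d G)).2 hdiff_S
  have hg_S : ∀ᵐ x ∂μ, g x ∈ Sset d G :=
    (ae_map_iff hmg (Sset_meas d G)).1 (by rw [hgpush]; exact hν_S)
  -- Fenchel–Young a.e. inequality for g
  have hFY : ∀ᵐ x ∂μ, ⟪x, g x⟫ ≤ G x + Gs (g x) := by
    filter_upwards [hg_S] with x hx
    have := le_ciSup (Sset_bdd hGconv hx) x
    have hGs : Gs (g x) = ⨆ z : EuclideanSpace ℝ (Fin d), (⟪z, g x⟫ - G z) := rfl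
    rw [hGs]
    linarith
  -- equality a.e. for the gradient
  have hEQ : ∀ᵐ x ∂μ, ⟪x, gradient G x⟫ = G x + Gs (gradient G x) := by
    filter_upwards [hGdiff] with x hx
    have h := conj_eq hGconv hx
    have hGs : Gs (gradient G x) = ⨆ z : EuclideanSpace ℝ (Fin d), (⟪z, gradient G x⟫ - G z) := rfl
    rw [hGs, h]; ring
  have I2 : ∫ x, ⟪x, gradient G x⟫ ∂μ = ∫ x, G x ∂μ + ∫ y, Gs y ∂ν := by
    rw [integral_congr_ae hEQ, integral_add hGint hGsGrad, hGsGradeq]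
  have I1 : ∫ x, ⟪x, g x⟫ ∂μ ≤ ∫ x, G x ∂μ + ∫ y, Gs y ∂ν := by
    calc ∫ x, ⟪x, g x⟫ ∂μ ≤ ∫ x, (G x + Gs (g x)) ∂μ :=
          integral_mono_ae hinner_g (hGint.add hGsg) hFY
    _ = _ := by rw [integral_add hGint hGsg, hGsgeq]
  have conj2 : ∫ x, ⟪x, g x⟫ ∂μ ≤ ∫ x, ⟪x, gradient G x⟫ ∂μ := by rw [I2]; exact I1
  refine ⟨?_, conj2⟩
  -- expand the squared distances
  have hsub2 : ∀ φ : EuclideanSpace ℝ (Fin d) → EuclideanSpace ℝ (Fin d), AEMeasurable φ μ → Integrable (fun x => ‖φ x‖ ^ 2) μ →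
      Integrable (fun x => ‖x - φ x‖ ^ 2) μ := by
    intro φ hφ hφ2
    have hsm : AEStronglyMeasurable (fun x => ‖x - φ x‖ ^ 2) μ :=
      ((continuous_norm.pow 2).measurable.comp_aemeasurable (aemeasurable_id.sub hφ)).aestronglyMeasurable
    refine ((hμ2.add hφ2).const_mul 2).mono' hsm ?_
    filter_upwards with x
    have h1 := norm_sub_le x (φ x)
    have h2 := norm_nonneg x
    have h3 := norm_nonneg (φ x)
    have h4 := norm_nonneg (x - φ x)
    rw [Real.norm_eq_abs, abs_of_nonneg (by positivity)]
    simp only [Pi.add_apply]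
    nlinarith [sq_nonneg (‖x‖ - ‖φ x‖)]
  have expand : ∀ φ : EuclideanSpace ℝ (Fin d) → EuclideanSpace ℝ (Fin d), AEMeasurable φ μ → Integrable (fun x => ‖φ x‖ ^ 2) μ →
      ∫ x, ‖x - φ x‖ ^ 2 ∂μ
        = ∫ x, ‖x‖ ^ 2 ∂μ - 2 * ∫ x, ⟪x, φ x⟫ ∂μ + ∫ x, ‖φ x‖ ^ 2 ∂μ := by
    intro φ hφ hφ2
    have hi := hinner φ hφ hφ2
    have hae : (fun x => ‖x - φ x‖ ^ 2)
        =ᵐ[μ] fun x => (‖x‖ ^ 2 - 2 * ⟪x, φ x⟫) + ‖φ x‖ ^ 2 := by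
      filter_upwards with x
      rw [norm_sub_sq_real]
    have hA : Integrable (fun a => ‖a‖ ^ 2 - 2 * ⟪a, φ a⟫) μ := hμ2.sub (hi.const_mul 2)
    have hB : Integrable (fun a => 2 * ⟪a, φ a⟫) μ := hi.const_mul 2
    rw [integral_congr_ae hae, integral_add hA hφ2, integral_sub hμ2 hB, integral_const_mul]
  rw [expand _ hmGrad hGrad2, expand _ hmg hg2, hGrad2eq, hg2eq]
  linarith
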